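/- Let n, N be natural numbers with 1 ≤ n ≤ N, let (Ω, μ) be a probability space, and let X_1, ..., X_n : Ω → ℕ be mutually independent random variables such that for each i ∈ {1,...,n}, X_i is uniformly distributed on {1, ..., N-i+1}, i.e. μ(X_i = k) = 1/(N-i+1) for every k ∈ {1,...,N-i+1} and μ(X_i = k) = 0 otherwise. Then the total number of trials T = X_1 + ... + X_n satisfies Var(T) = n(6N² - 6Nn + 6N + 2n² - 3n - 5)/72. -/

import Mathlib

open MeasureTheory ProbabilityTheory

private lemma ae_mem_Icc {Ω : Type*} [MeasurableSpace Ω] (μ : Measure Ω)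
    (X : Ω → ℕ) (m : ℕ)
    (hzero : ∀ k : ℕ, (k = 0 ∨ m < k) → μ {ω | X ω = k} = 0) :
    ∀ᵐ ω ∂μ, X ω ∈ Finset.Icc 1 m := by
  have h : μ {ω | X ω ∉ Finset.Icc 1 m} = 0 := by
    have hsub : {ω | X ω ∉ Finset.Icc 1 m} ⊆
        ⋃ k : ℕ, {ω | (k = 0 ∨ m < k) ∧ X ω = k} := by
      intro ω hω
      simp only [Set.mem_setOf_eq, Finset.mem_Icc, not_and_or, not_le] at hω
      refine Set.mem_iUnion.2 ⟨X ω, ?_, rfl⟩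
      omega
    refine measure_mono_null hsub (measure_iUnion_null fun k => ?_)
    by_cases hk : k = 0 ∨ m < k
    · refine measure_mono_null (fun ω hω => hω.2) (hzero k hk)
    · simp [hk]
  exact (MeasureTheory.ae_iff).2 h

private lemma sum_Icc_cast (m : ℕ) :
    ∑ k ∈ Finset.Icc 1 m, (k : ℝ) = m * (m + 1) / 2 := by
  induction m with
  | zero => simp
  | succ m ih =>
    rw [Finset.sum_Icc_succ_top (by omega), ih]
    push_cast; ring

private lemma sum_Icc_sq (m : ℕ) :
    ∑ k ∈ Finset.Icc 1 m, (k : ℝ) ^ 2 = m * (m + 1) * (2 * m + 1) / 6 := by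
  induction m with
  | zero => simp
  | succ m ih =>
    rw [Finset.sum_Icc_succ_top (by omega), ih]
    push_cast; ring

private lemma integral_of_uniform {Ω : Type*} [MeasurableSpace Ω] (μ : Measure Ω)
    [IsProbabilityMeasure μ] (X : Ω → ℕ) (hX : Measurable X) (m : ℕ) (hm : 1 ≤ m)
    (hunif : ∀ k : ℕ, 1 ≤ k → k ≤ m → μ {ω | X ω = k} = ENNReal.ofReal (1 / (m : ℝ)))
    (hzero : ∀ k : ℕ, (k = 0 ∨ m < k) → μ {ω | X ω = k} = 0)
    (g : ℕ → ℝ) :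
    ∫ ω, g (X ω) ∂μ = (∑ k ∈ Finset.Icc 1 m, g k) / m := by
  have hae := ae_mem_Icc μ X m hzero
  have heq : (fun ω => g (X ω)) =ᵐ[μ]
      fun ω => ∑ k ∈ Finset.Icc 1 m, Set.indicator {ω' | X ω' = k} (fun _ => g k) ω := by
    filter_upwards [hae] with ω hω
    rw [Finset.sum_eq_single (X ω)]
    · simp [Set.indicator]
    · intro k hk hne
      exact Set.indicator_of_notMem (fun h => hne (Set.mem_setOf_eq ▸ h).symm) _
    · intro h; exact absurd hω h
  rw [integral_congr_ae heq, integral_finset_sum]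
  · have : ∀ k ∈ Finset.Icc 1 m,
        ∫ ω, Set.indicator {ω' | X ω' = k} (fun _ => g k) ω ∂μ = g k * (1 / m) := by
      intro k hk
      rw [show {ω' | X ω' = k} = X ⁻¹' {k} from rfl,
        MeasureTheory.integral_indicator_const _ (hX (measurableSet_singleton k))]
      rw [show X ⁻¹' {k} = {ω' | X ω' = k} from rfl]
      rw [Finset.mem_Icc] at hk
      rw [measureReal_def, hunif k hk.1 hk.2, ENNReal.toReal_ofReal (by positivity)]
      simp [mul_comm]
    rw [Finset.sum_congr rfl this, ← Finset.sum_mul]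
    ring
  · intro k hk
    exact (integrable_const (g k)).indicator (hX (measurableSet_singleton k))

private lemma memLp_of_uniform {Ω : Type*} [MeasurableSpace Ω] (μ : Measure Ω)
    [IsProbabilityMeasure μ] (X : Ω → ℕ) (hX : Measurable X) (m : ℕ)
    (hzero : ∀ k : ℕ, (k = 0 ∨ m < k) → μ {ω | X ω = k} = 0) :
    MemLp (fun ω => (X ω : ℝ)) 2 μ := by
  refine MemLp.of_bound ((measurable_from_top.comp hX).aestronglyMeasurable) (m : ℝ) ?_
  filter_upwards [ae_mem_Icc μ X m hzero] with ω hω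
  rw [Finset.mem_Icc] at hω
  rw [Real.norm_eq_abs, abs_of_nonneg (by positivity)]
  exact_mod_cast hω.2

private lemma variance_of_uniform {Ω : Type*} [MeasurableSpace Ω] (μ : Measure Ω)
    [IsProbabilityMeasure μ] (X : Ω → ℕ) (hX : Measurable X) (m : ℕ) (hm : 1 ≤ m)
    (hunif : ∀ k : ℕ, 1 ≤ k → k ≤ m → μ {ω | X ω = k} = ENNReal.ofReal (1 / (m : ℝ)))
    (hzero : ∀ k : ℕ, (k = 0 ∨ m < k) → μ {ω | X ω = k} = 0) :
    variance (fun ω => (X ω : ℝ)) μ = ((m : ℝ) ^ 2 - 1) / 12 := by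
  have hmem := memLp_of_uniform μ X hX m hzero
  rw [variance_eq_sub hmem]
  have hm' : (0 : ℝ) < m := by exact_mod_cast hm
  have h1 : μ[fun ω => (X ω : ℝ)] = ((m : ℝ) + 1) / 2 := by
    rw [integral_of_uniform μ X hX m hm hunif hzero (fun k => (k : ℝ)), sum_Icc_cast]
    field_simp
  have h2 : μ[(fun ω => (X ω : ℝ)) ^ 2] = ((m : ℝ) + 1) * (2 * m + 1) / 6 := by
    have : ((fun ω => (X ω : ℝ)) ^ 2) = fun ω => ((fun k : ℕ => (k : ℝ) ^ 2) (X ω)) := by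
      funext ω; simp [pow_two]
    rw [this, integral_of_uniform μ X hX m hm hunif hzero (fun k => (k : ℝ) ^ 2), sum_Icc_sq]
    field_simp
  rw [h1, h2]
  ring

private lemma sum_formula (x : ℝ) (n : ℕ) :
    ∑ i ∈ Finset.range n, ((x - i) ^ 2 - 1) / 12
      = n * (6 * x ^ 2 - 6 * x * n + 6 * x + 2 * n ^ 2 - 3 * n - 5) / 72 := by
  induction n with
  | zero => simp
  | succ n ih =>
    rw [Finset.sum_range_succ, ih]
    push_cast; ring

/-- Lock-by-lock strategy: variance of the total number of trials to open `n` locks with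
`N ≥ n` keys, assuming mutual independence.  The variable `X i` (for `i : Fin n`, corresponding
to the `(i+1)`-th lock) is uniform on `{1, ..., N-i}`. -/
theorem lock_by_lock_variance
    (n N : ℕ) (hn : 1 ≤ n) (hnN : n ≤ N)
    {Ω : Type*} [MeasurableSpace Ω] (μ : Measure Ω) [IsProbabilityMeasure μ]
    (X : Fin n → Ω → ℕ) (hX : ∀ i, Measurable (X i))
    (hindep : iIndepFun X μ)
    (hunif : ∀ i : Fin n, ∀ k : ℕ, 1 ≤ k → k ≤ N - (i : ℕ) →
      μ {ω | X i ω = k} = ENNReal.ofReal (1 / ((N : ℝ) - (i : ℕ))))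
    (hzero : ∀ i : Fin n, ∀ k : ℕ, (k = 0 ∨ N - (i : ℕ) < k) → μ {ω | X i ω = k} = 0) :
    variance (fun ω => ((∑ i, X i ω : ℕ) : ℝ)) μ
      = (n : ℝ) * (6 * (N : ℝ) ^ 2 - 6 * (N : ℝ) * (n : ℝ) + 6 * (N : ℝ)
          + 2 * (n : ℝ) ^ 2 - 3 * (n : ℝ) - 5) / 72 := by
  classical
  set Y : Fin n → Ω → ℝ := fun i ω => (X i ω : ℝ) with hY
  have hiN : ∀ i : Fin n, (i : ℕ) < N := fun i => lt_of_lt_of_le i.2 hnN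
  have hcast : ∀ i : Fin n, ((N - (i : ℕ) : ℕ) : ℝ) = (N : ℝ) - (i : ℕ) := by
    intro i
    rw [Nat.cast_sub (le_of_lt (hiN i))]
  have hm : ∀ i : Fin n, 1 ≤ N - (i : ℕ) := fun i => by omega
  have hunif' : ∀ i : Fin n, ∀ k : ℕ, 1 ≤ k → k ≤ N - (i : ℕ) →
      μ {ω | X i ω = k} = ENNReal.ofReal (1 / ((N - (i : ℕ) : ℕ) : ℝ)) := by
    intro i k h1 h2
    rw [hunif i k h1 h2, hcast]
  have hmem : ∀ i : Fin n, MemLp (Y i) 2 μ :=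
    fun i => memLp_of_uniform μ (X i) (hX i) (N - (i : ℕ)) (hzero i)
  have hvar : ∀ i : Fin n, variance (Y i) μ = (((N : ℝ) - (i : ℕ)) ^ 2 - 1) / 12 := by
    intro i
    rw [show Y i = fun ω => (X i ω : ℝ) from rfl,
      variance_of_uniform μ (X i) (hX i) (N - (i : ℕ)) (hm i) (hunif' i) (hzero i), hcast]
  have hsumeq : (fun ω => ((∑ i, X i ω : ℕ) : ℝ)) = ∑ i, Y i := by
    funext ω
    push_cast
    simp [Y, Finset.sum_apply]
  have hindepY : ∀ i j : Fin n, i ≠ j → IndepFun (Y i) (Y j) μ := by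
    intro i j hij
    exact (hindep.indepFun hij).comp measurable_from_top measurable_from_top
  rw [hsumeq, IndepFun.variance_sum (fun i _ => hmem i)
    (fun i _ j _ hij => hindepY i j hij)]
  rw [Finset.sum_congr rfl (fun i _ => hvar i)]
  rw [Fin.sum_univ_eq_sum_range (fun i => (((N : ℝ) - (i : ℕ)) ^ 2 - 1) / 12)]
  exact sum_formula (N : ℝ) n
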